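/- For every d ≥ 1 there exists a d-dimensional lattice simplex T' ⊂ ℝ^d with exactly one interior lattice point whose barycentric coordinates β₀ ≥ β₁ ≥ … ≥ β_d > 0 (of the interior point) satisfy β_i ≤ 1/(2^{2^{i−1}} − 1) for every i ∈ {0,…,d}. -/

import Mathlib

def syl : ℕ → ℕ
  | 0 => 2
  | n+1 => syl n * (syl n - 1) + 1

lemma syl_ge_two : ∀ n, 2 ≤ syl n := by
  intro n
  induction n with
  | zero => simp [syl]
  | succ n ih =>
    have h1 : 1 ≤ syl n - 1 := by omega
    have : 2 * 1 ≤ syl n * (syl n - 1) := Nat.mul_le_mul ih h1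
    simp only [syl]; omega

section Main
variable (d : ℕ)

noncomputable def uu : Fin (d+1) → (Fin d → ℝ) :=
  fun i j => if (i:ℕ) = (j:ℕ) then (syl (j:ℕ) : ℝ) else 0

lemma uu_last : uu d (Fin.last d) = 0 := by
  funext j
  have : ((Fin.last d : Fin (d+1)) : ℕ) ≠ (j:ℕ) := by
    have := j.isLt; simp [Fin.last]; omega
  simp only [uu, Pi.zero_apply, ite_eq_right_iff]
  intro h; exact absurd h this

lemma uu_indep : AffineIndependent ℝ (uu d) := by
  rw [affineIndependent_iff_linearIndependent_vsub ℝ (uu d) (Fin.last d)]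
  -- family : {i // i ≠ last} → E, i ↦ uu i -ᵥ uu last = uu i
  have hw : LinearIndependent ℝ (fun i : Fin d =>
      ((Pi.basisFun ℝ (Fin d)).unitsSMul
        (fun i => Units.mk0 ((syl (i:ℕ) : ℝ)) (by have := syl_ge_two (i:ℕ); positivity))) i) :=
    Module.Basis.linearIndependent _
  have he : Function.Injective (fun i : {x : Fin (d+1) // x ≠ Fin.last d} =>
      (⟨(i : Fin (d+1)).val, by
        have h1 := (i : Fin (d+1)).isLt
        have h2 : (i : Fin (d+1)).val ≠ d := fun h => i.2 (Fin.ext h)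
        omega⟩ : Fin d)) := by
    intro a b hab
    simp only [Fin.mk.injEq] at hab
    exact Subtype.ext (Fin.ext hab)
  have := hw.comp _ he
  convert this using 1
  funext i
  funext j
  simp only [uu, uu_last, Function.comp, Module.Basis.unitsSMul_apply, Pi.basisFun_apply,
    Units.smul_mk0, vsub_eq_sub, Pi.sub_apply, Pi.zero_apply, sub_zero,
    Pi.smul_apply, Pi.single_apply, smul_eq_mul]
  rcases eq_or_ne ((i : Fin (d+1)) : ℕ) (j : ℕ) with h | h
  · have hj : (j : ℕ) = ((⟨((i : Fin (d+1)) : ℕ), by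
      have h1 := (i : Fin (d+1)).isLt
      have h2 : (i : Fin (d+1)).val ≠ d := fun hh => i.2 (Fin.ext hh)
      omega⟩ : Fin d) : ℕ) := h.symm
    rw [if_pos h, if_pos (Fin.ext hj), mul_one, h]
  · have hj : j ≠ (⟨((i : Fin (d+1)) : ℕ), by
      have h1 := (i : Fin (d+1)).isLt
      have h2 : (i : Fin (d+1)).val ≠ d := fun hh => i.2 (Fin.ext hh)
      omega⟩ : Fin d) := by
      intro hh
      exact h (by rw [hh])
    simp [h, hj]
  · rfl
  · rfl

end Main

section Basis
variable (d : ℕ)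

lemma uu_span : affineSpan ℝ (Set.range (uu d)) = ⊤ := by
  rw [(uu_indep d).affineSpan_eq_top_iff_card_eq_finrank_add_one]
  simp [Module.finrank_fintype_fun_eq_card]

noncomputable def bb : AffineBasis (Fin (d+1)) ℝ (Fin d → ℝ) :=
  ⟨uu d, uu_indep d, uu_span d⟩

noncomputable def W (x : Fin d → ℝ) : Fin (d+1) → ℝ :=
  fun i => if h : (i:ℕ) < d then x ⟨i, h⟩ / (syl (i:ℕ) : ℝ)
           else 1 - ∑ j : Fin d, x j / (syl (j:ℕ) : ℝ)

lemma W_sum (x : Fin d → ℝ) : ∑ i, W d x i = 1 := by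
  rw [Fin.sum_univ_castSucc]
  have h1 : ∀ i : Fin d, W d x (Fin.castSucc i) = x i / (syl (i:ℕ) : ℝ) := by
    intro i
    simp [W, i.isLt]
  have h2 : W d x (Fin.last d) = 1 - ∑ j : Fin d, x j / (syl (j:ℕ) : ℝ) := by
    simp [W]
  simp only [h1, h2]
  ring

lemma W_comb (x : Fin d → ℝ) : ∑ i, W d x i • uu d i = x := by
  rw [Fin.sum_univ_castSucc, uu_last, smul_zero, add_zero]
  funext j
  have hval : ∀ i : Fin d, ((Fin.castSucc i : Fin (d+1)) : ℕ) = (i : ℕ) := fun i => rfl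
  have h1 : ∀ i : Fin d, (W d x (Fin.castSucc i) • uu d (Fin.castSucc i)) j
      = if i = j then x i else 0 := by
    intro i
    simp only [W, hval, i.isLt, dif_pos, uu, Pi.smul_apply, smul_eq_mul]
    rcases eq_or_ne i j with h | h
    · have hs : (syl (j:ℕ) : ℝ) ≠ 0 := by
        have := syl_ge_two (j:ℕ); positivity
      rw [if_pos h, if_pos (by rw [h]), h, div_mul_cancel₀ _ hs]
    · rw [if_neg h, if_neg (fun hh => h (Fin.ext hh)), mul_zero]
  rw [Finset.sum_apply]
  simp only [h1]
  simp

lemma W_coord (x : Fin d → ℝ) (i : Fin (d+1)) : (bb d).coord i x = W d x i := by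
  have hx : x = Finset.univ.affineCombination ℝ (uu d) (W d x) := by
    rw [Finset.univ.affineCombination_eq_linear_combination (uu d) (W d x) (W_sum d x)]
    exact (W_comb d x).symm
  conv_lhs => rw [hx]
  exact AffineBasis.coord_apply_combination_of_mem _ (Finset.mem_univ i) (W_sum d x)

lemma mem_interior_iff (x : Fin d → ℝ) :
    x ∈ interior (convexHull ℝ (Set.range (uu d))) ↔ ∀ i, 0 < W d x i := by
  have : Set.range (uu d) = Set.range ⇑(bb d) := rfl
  rw [this, (bb d).interior_convexHull]
  simp only [Set.mem_setOf_eq, W_coord]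

end Basis

lemma syl_lt_succ (n : ℕ) : syl n < syl (n+1) := by
  have h := syl_ge_two n
  have h1 : 1 ≤ syl n - 1 := by omega
  have : syl n * 1 ≤ syl n * (syl n - 1) := Nat.mul_le_mul_left _ h1
  simp only [syl]; omega

lemma syl_mono : StrictMono syl := strictMono_nat_of_lt_succ syl_lt_succ

lemma syl_cast_succ (n : ℕ) : (syl (n+1) : ℝ) - 1 = (syl n : ℝ) * ((syl n : ℝ) - 1) := by
  have h := syl_ge_two n
  simp only [syl]
  push_cast [Nat.cast_sub (by omega : 1 ≤ syl n)]
  ring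

lemma syl_telescope (m : ℕ) :
    ∑ j ∈ Finset.range m, (1 : ℝ) / (syl j : ℝ) = 1 - 1 / ((syl m : ℝ) - 1) := by
  induction m with
  | zero => norm_num [syl]
  | succ m ih =>
    rw [Finset.sum_range_succ, ih, syl_cast_succ]
    have h2 : (2:ℝ) ≤ (syl m : ℝ) := by exact_mod_cast syl_ge_two m
    have h0 : (syl m : ℝ) ≠ 0 := by linarith
    have h1 : (syl m : ℝ) - 1 ≠ 0 := by linarith
    field_simp
    ring

lemma syl_lb : ∀ n, 2 ^ (2 ^ n) ≤ syl (n+1) - 1 := by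
  intro n
  induction n with
  | zero => simp [syl]
  | succ n ih =>
    have h := syl_ge_two (n+1)
    have h1 : syl (n+2) - 1 = syl (n+1) * (syl (n+1) - 1) := by simp [syl]
    have h2 : (syl (n+1) - 1) * (syl (n+1) - 1) ≤ syl (n+1) * (syl (n+1) - 1) :=
      Nat.mul_le_mul_right _ (by omega)
    calc 2 ^ (2 ^ (n+1)) = 2 ^ (2^n) * 2 ^ (2^n) := by rw [← pow_add]; ring_nf
      _ ≤ (syl (n+1) - 1) * (syl (n+1) - 1) := Nat.mul_le_mul ih ih
      _ ≤ syl (n+2) - 1 := by omega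

/-- Theorem 3.II: for every `d ≥ 1` there is a lattice `d`-simplex with exactly one
interior lattice point whose ordered barycentric coordinates `β₀ ≥ ⋯ ≥ β_d > 0`
satisfy `β_i ≤ 1/(2^{2^{i-1}} - 1)`. -/
theorem stmt16 (d : ℕ) (hd : 0 < d) :
    ∃ (v : Fin (d + 1) → Fin d → ℤ) (q : Fin d → ℤ) (β : Fin (d + 1) → ℝ),
      AffineIndependent ℝ (fun i => fun j => ((v i j : ℤ) : ℝ)) ∧
      (fun j => ((q j : ℤ) : ℝ)) ∈
        interior (convexHull ℝ (Set.range (fun i => fun j => ((v i j : ℤ) : ℝ)))) ∧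
      (∀ q' : Fin d → ℤ,
        (fun j => ((q' j : ℤ) : ℝ)) ∈
          interior (convexHull ℝ (Set.range (fun i => fun j => ((v i j : ℤ) : ℝ)))) →
            q' = q) ∧
      (∑ i, β i = 1) ∧
      ((∑ i, β i • (fun j => ((v i j : ℤ) : ℝ))) = fun j => ((q j : ℤ) : ℝ)) ∧
      (∀ i j : Fin (d + 1), i ≤ j → β j ≤ β i) ∧
      (∀ i, 0 < β i) ∧
      ∀ i : Fin (d + 1),
        β i ≤ 1 / ((2 : ℝ) ^ ((2 : ℝ) ^ (((i : ℕ) : ℝ) - 1)) - 1) := by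
  classical
  set v : Fin (d+1) → Fin d → ℤ := fun i j => if (i:ℕ) = (j:ℕ) then (syl (j:ℕ) : ℤ) else 0
    with hv
  set β : Fin (d+1) → ℝ :=
    fun i => if (i:ℕ) < d then 1/(syl (i:ℕ) : ℝ) else 1/((syl d : ℝ) - 1) with hβ
  have hu : (fun i => fun j => ((v i j : ℤ) : ℝ)) = uu d := by
    funext i j
    simp only [hv, uu]
    split_ifs <;> simp
  have hq : (fun j : Fin d => (((1:ℤ)) : ℝ)) = (fun _ : Fin d => (1:ℝ)) := by
    funext j; norm_num
  -- facts
  have hsylpos : ∀ n, (0:ℝ) < (syl n : ℝ) := fun n => by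
    have := syl_ge_two n; positivity
  have hsum1 : ∑ j : Fin d, (1:ℝ) / (syl (j:ℕ) : ℝ) = 1 - 1/((syl d : ℝ) - 1) := by
    rw [Fin.sum_univ_eq_sum_range (fun j => (1:ℝ)/(syl j : ℝ)) d]
    exact syl_telescope d
  have hsd : (2:ℝ) ≤ (syl d : ℝ) := by exact_mod_cast syl_ge_two d
  have hβW : β = W d (fun _ => 1) := by
    funext i
    simp only [hβ, W]
    split_ifs with h
    · rfl
    · rw [hsum1]; ring
  refine ⟨v, fun _ => 1, β, ?_, ?_, ?_, ?_, ?_, ?_, ?_, ?_⟩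
  · rw [hu]; exact uu_indep d
  · rw [hu, hq]
    rw [mem_interior_iff]
    intro i
    rw [← hβW]
    simp only [hβ]
    split_ifs with h
    · exact one_div_pos.mpr (hsylpos _)
    · exact one_div_pos.mpr (by linarith)
  · -- uniqueness
    intro q' hq'
    rw [hu] at hq'
    rw [mem_interior_iff] at hq'
    set x : Fin d → ℝ := fun j => ((q' j : ℤ) : ℝ) with hx
    have hpos : ∀ j : Fin d, 1 ≤ q' j := by
      intro j
      have := hq' (Fin.castSucc j)
      simp only [W, Fin.coe_castSucc, j.isLt, dif_pos] at this
      have hxj : (0:ℝ) < x ⟨(j:ℕ), j.isLt⟩ := by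
        have hs := hsylpos (j:ℕ)
        have h2 := mul_pos this hs
        rwa [div_mul_cancel₀ _ (ne_of_gt hs)] at h2
      have : (0:ℝ) < ((q' j : ℤ) : ℝ) := by
        have hjj : (⟨(j:ℕ), j.isLt⟩ : Fin d) = j := Fin.ext rfl
        rwa [hx, hjj] at hxj
      exact_mod_cast this
    have hlast := hq' (Fin.last d)
    have hld : ¬ ((Fin.last d : Fin (d+1)) : ℕ) < d := by simp [Fin.last]
    simp only [W, hld, dif_neg, not_false_iff] at hlast
    -- hlast : 0 < 1 - ∑ j, x j / syl j
    funext k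
    by_contra hk
    have hk2 : 2 ≤ q' k := by
      have := hpos k
      omega
    have hxj1 : ∀ j : Fin d, (1:ℝ) ≤ x j := fun j => by
      have := hpos j
      simp only [hx]
      exact_mod_cast this
    have hxk : (2:ℝ) ≤ x k := by
      simp only [hx]; exact_mod_cast hk2
    have hnn : ∀ j ∈ Finset.univ, (0:ℝ) ≤ (x j - 1)/(syl (j:ℕ) : ℝ) := fun j _ =>
      div_nonneg (by linarith [hxj1 j]) (le_of_lt (hsylpos _))
    have hsingle : (x k - 1)/(syl (k:ℕ) : ℝ) ≤ ∑ j, (x j - 1)/(syl (j:ℕ) : ℝ) :=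
      Finset.single_le_sum hnn (Finset.mem_univ k)
    have hsplit : ∑ j : Fin d, x j/(syl (j:ℕ) : ℝ)
        = (∑ j : Fin d, (1:ℝ)/(syl (j:ℕ) : ℝ)) + ∑ j : Fin d, (x j - 1)/(syl (j:ℕ) : ℝ) := by
      rw [← Finset.sum_add_distrib]
      apply Finset.sum_congr rfl
      intro j _
      ring
    have hks : (1:ℝ)/((syl d : ℝ) - 1) ≤ 1/(syl (k:ℕ) : ℝ) := by
      have hlt : syl (k:ℕ) < syl d := syl_mono k.isLt
      have hle : (syl (k:ℕ) : ℝ) ≤ (syl d : ℝ) - 1 := by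
        have : (syl (k:ℕ) : ℝ) + 1 ≤ (syl d : ℝ) := by exact_mod_cast hlt
        linarith
      exact one_div_le_one_div_of_le (hsylpos _) hle
    have h1k : 1/(syl (k:ℕ) : ℝ) ≤ (x k - 1)/(syl (k:ℕ) : ℝ) := by
      have hid : (x k - 1)/(syl (k:ℕ) : ℝ) - 1/(syl (k:ℕ) : ℝ) = (x k - 2)/(syl (k:ℕ) : ℝ) := by
        ring
      have hnn2 : (0:ℝ) ≤ (x k - 2)/(syl (k:ℕ) : ℝ) :=
        div_nonneg (by linarith) (le_of_lt (hsylpos _))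
      linarith
    linarith [hsum1, hsplit, hsingle, h1k, hks, hlast]
  · rw [hβW]; exact W_sum d _
  · have hui : ∀ i : Fin (d+1), (fun j => ((v i j : ℤ) : ℝ)) = uu d i :=
      fun i => congrFun hu i
    simp only [hui, hβW, Int.cast_one]
    exact W_comb d _
  · -- monotone
    intro i j hij
    simp only [hβ]
    have hmono : ∀ a b : ℕ, a ≤ b → (syl a : ℝ) ≤ (syl b : ℝ) := by
      intro a b hab
      exact_mod_cast syl_mono.monotone hab
    split_ifs with h1 h2 h2
    · exact one_div_le_one_div_of_le (hsylpos _) (hmono _ _ hij)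
    · omega
    · -- j not < d, i < d : 1/(syl d - 1) ≤ 1/syl i
      have hlt : syl (i:ℕ) < syl d := syl_mono h2
      have : (syl (i:ℕ) : ℝ) ≤ (syl d : ℝ) - 1 := by
        have : (syl (i:ℕ) : ℝ) + 1 ≤ (syl d : ℝ) := by exact_mod_cast hlt
        linarith
      exact one_div_le_one_div_of_le (hsylpos _) this
    · exact le_refl _
  · intro i
    simp only [hβ]
    split_ifs with h
    · exact one_div_pos.mpr (hsylpos _)
    · exact one_div_pos.mpr (by linarith)
  · -- the bound
    intro i
    simp only [hβ]
    rcases Nat.eq_zero_or_pos (i:ℕ) with h0 | h1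
    · have hi : ((i:ℕ) : ℝ) = 0 := by rw [h0]; norm_num
      rw [hi, if_pos (by omega : (i:ℕ) < d), h0]
      have hs0 : (syl 0 : ℝ) = 2 := by norm_num [syl]
      rw [hs0, show (0:ℝ) - 1 = -1 by norm_num, Real.rpow_neg_one]
      have hlt : (1:ℝ) < (2:ℝ) ^ ((2:ℝ)⁻¹) := by
        rw [show (1:ℝ) = (2:ℝ) ^ (0:ℝ) from (Real.rpow_zero 2).symm]
        exact Real.rpow_lt_rpow_of_exponent_lt (by norm_num) (by norm_num)
      have hle : (2:ℝ) ^ ((2:ℝ)⁻¹) ≤ 3 := by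
        have h2 : (2:ℝ) ^ ((2:ℝ)⁻¹) ≤ (2:ℝ) ^ (1:ℝ) :=
          Real.rpow_le_rpow_of_exponent_le (by norm_num) (by norm_num)
        rw [Real.rpow_one] at h2
        linarith
      rw [div_le_div_iff₀ (by norm_num) (by linarith)]
      linarith
    · obtain ⟨m, hm⟩ : ∃ m, (i:ℕ) = m + 1 := ⟨(i:ℕ) - 1, by omega⟩
      have hcast : ((i:ℕ) : ℝ) - 1 = (m:ℝ) := by rw [hm]; push_cast; ring
      rw [hcast, Real.rpow_natCast]
      have hNN : ((2:ℝ) ^ m) = (((2:ℕ) ^ m : ℕ) : ℝ) := by push_cast; ring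
      rw [hNN, Real.rpow_natCast, show ((2:ℝ) ^ ((2:ℕ)^m : ℕ)) = (((2:ℕ)^((2:ℕ)^m : ℕ) : ℕ) : ℝ) by
        push_cast; ring]
      set N : ℕ := (2:ℕ) ^ ((2:ℕ)^m : ℕ) with hN
      have hN2 : 2 ≤ N := by
        rw [hN]
        calc 2 = 2^1 := by norm_num
          _ ≤ 2^((2:ℕ)^m) := Nat.pow_le_pow_right (by norm_num) (Nat.one_le_two_pow)
      have hlb := syl_lb m
      have hs2 := syl_ge_two (m+1)
      have hlbr : (N:ℝ) ≤ (syl (m+1) : ℝ) - 1 := by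
        have hc : ((N:ℕ) : ℝ) ≤ ((syl (m+1) - 1 : ℕ) : ℝ) := by exact_mod_cast hlb
        rwa [Nat.cast_sub (by omega), Nat.cast_one] at hc
      have hNpos : (0:ℝ) < (N:ℝ) - 1 := by
        have : (2:ℝ) ≤ (N:ℝ) := by exact_mod_cast hN2
        linarith
      split_ifs with h
      · rw [hm]
        apply one_div_le_one_div_of_le hNpos
        linarith [hlbr]
      · have hid : (i:ℕ) = d := by have := i.isLt; omega
        have hmd : m + 1 = d := by omega
        apply one_div_le_one_div_of_le hNpos
        rw [← hmd]
        linarith [hlbr]
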